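/- Let H be a complex separable Hilbert space and let Φ : B₁(H) → B₁(H) be a linear map that preserves Hermiticity and trace. If Φ is contractive on Hermitian operators (‖Φ(X)‖₁ ≤ ‖X‖₁ for all Hermitian X ∈ B₁(H)), then Φ is positive: Φ(X) ≥ 0 whenever X ≥ 0. -/

import Mathlib

open Matrix
open scoped ComplexOrder

/-- The positive semidefinite square root of a positive semidefinite matrix
(the Mathlib definition of December 2024, since removed from Mathlib). -/
noncomputable def Matrix.PosSemidef.sqrt {n : Type*} [Fintype n] [DecidableEq n]
    {𝕜 : Type*} [RCLike 𝕜] {A : Matrix n n 𝕜} (hA : A.PosSemidef) : Matrix n n 𝕜 :=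
  hA.1.eigenvectorUnitary.1 * diagonal ((↑) ∘ (√·) ∘ hA.1.eigenvalues) *
  (star hA.1.eigenvectorUnitary : Matrix n n 𝕜)

/-- Trace norm `‖A‖₁ = Tr √(Aᴴ A)` (finite-dimensional stand-in for the
trace norm on trace-class operators `B₁(H)`). -/
noncomputable def traceNorm {ι : Type*} [Fintype ι] [DecidableEq ι]
    (A : Matrix ι ι ℂ) : ℝ :=
  ((Matrix.PosSemidef.sqrt (Matrix.posSemidef_conjTranspose_mul_self A)).trace).re

lemma aux_conj_diag_mul {ι : Type*} [Fintype ι] [DecidableEq ι]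
    (U : Matrix ι ι ℂ) (hU : star U * U = 1) (f g : ι → ℂ) :
    (U * diagonal f * star U) * (U * diagonal g * star U)
      = U * diagonal (f * g) * star U := by
  simp only [mul_assoc]
  rw [← mul_assoc (star U) U, hU, one_mul, ← mul_assoc (diagonal f) (diagonal g),
    diagonal_mul_diagonal]
  rfl

lemma aux_traceNorm_herm {ι : Type*} [Fintype ι] [DecidableEq ι]
    {Y : Matrix ι ι ℂ} (hY : Y.IsHermitian) :
    traceNorm Y = ∑ i, |hY.eigenvalues i| := by
  unfold traceNorm
  set U : Matrix ι ι ℂ := (hY.eigenvectorUnitary : Matrix ι ι ℂ) with hU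
  have hUU : star U * U = 1 := (Matrix.mem_unitaryGroup_iff').mp hY.eigenvectorUnitary.2
  set B : Matrix ι ι ℂ := U * diagonal ((↑) ∘ fun i => |hY.eigenvalues i|) * star U with hBdef
  have hB : B.PosSemidef := by
    apply PosSemidef.mul_mul_conjTranspose_same
    refine posSemidef_diagonal_iff.mpr fun i => ?_
    rw [Function.comp_apply, Complex.le_def]
    simp [abs_nonneg]
  have hB2 : B ^ 2 = Yᴴ * Y := by
    rw [hY.eq, pow_two, hBdef, aux_conj_diag_mul U hUU]
    conv_rhs => rw [hY.spectral_theorem, Unitary.conjStarAlgAut_apply, ← hU, aux_conj_diag_mul U hUU]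
    congr 2
    refine congrArg Matrix.diagonal ?_
    funext i
    simp [Function.comp, Pi.mul_apply, ← Complex.ofReal_mul, abs_mul_abs_self]
  have hsq : Matrix.PosSemidef.sqrt (Matrix.posSemidef_conjTranspose_mul_self Y) = B := by
    have h1 : Matrix.PosSemidef.sqrt (posSemidef_conjTranspose_mul_self Y)
        = cfc Real.sqrt (Yᴴ * Y) := by
      rw [(posSemidef_conjTranspose_mul_self Y).1.cfc_eq]; rfl
    rw [h1, hY.eq, ← pow_two, ← cfc_comp_pow Real.sqrt 2 Y (ha := hY.isSelfAdjoint)]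
    simp_rw [Real.sqrt_sq_eq_abs]
    rw [hY.cfc_eq]
    unfold Matrix.IsHermitian.cfc
    rw [Unitary.conjStarAlgAut_apply, hBdef, hU]
    rfl
  rw [hsq, hBdef, trace_mul_cycle, hUU, one_mul, trace_diagonal]
  simp [Function.comp]

lemma aux_trace_herm {ι : Type*} [Fintype ι] [DecidableEq ι]
    {Y : Matrix ι ι ℂ} (hY : Y.IsHermitian) :
    Y.trace.re = ∑ i, hY.eigenvalues i := by
  have hUU : star (hY.eigenvectorUnitary : Matrix ι ι ℂ) * hY.eigenvectorUnitary = 1 :=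
    (Matrix.mem_unitaryGroup_iff').mp hY.eigenvectorUnitary.2
  conv_lhs => rw [hY.spectral_theorem, Unitary.conjStarAlgAut_apply]
  rw [trace_mul_cycle, hUU, one_mul, trace_diagonal]
  simp [Function.comp]

/-- A Hermiticity- and trace-preserving linear map which is trace-norm
contractive on Hermitian operators is positive. -/
theorem contractive_on_hermitian_implies_positive
    {ι : Type*} [Fintype ι] [DecidableEq ι]
    (Φ : Matrix ι ι ℂ →ₗ[ℂ] Matrix ι ι ℂ)
    (hherm : ∀ X : Matrix ι ι ℂ, Φ Xᴴ = (Φ X)ᴴ)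
    (htr : ∀ X : Matrix ι ι ℂ, (Φ X).trace = X.trace)
    (hcontr : ∀ X : Matrix ι ι ℂ, X.IsHermitian → traceNorm (Φ X) ≤ traceNorm X) :
    ∀ X : Matrix ι ι ℂ, X.PosSemidef → (Φ X).PosSemidef := by
  intro X hX
  have hXh : X.IsHermitian := hX.1
  have hYh : (Φ X).IsHermitian := by
    unfold Matrix.IsHermitian
    rw [← hherm, hXh.eq]
  refine hYh.posSemidef_iff_eigenvalues_nonneg.mpr ?_
  have key : ∑ i, |hYh.eigenvalues i| ≤ ∑ i, hYh.eigenvalues i := by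
    have h3 : ∑ i, |hXh.eigenvalues i| = ∑ i, hXh.eigenvalues i :=
      Finset.sum_congr rfl fun i _ => abs_of_nonneg (hX.eigenvalues_nonneg i)
    calc ∑ i, |hYh.eigenvalues i| = traceNorm (Φ X) := (aux_traceNorm_herm hYh).symm
      _ ≤ traceNorm X := hcontr X hXh
      _ = ∑ i, hXh.eigenvalues i := by rw [aux_traceNorm_herm hXh, h3]
      _ = X.trace.re := (aux_trace_herm hXh).symm
      _ = (Φ X).trace.re := by rw [htr]
      _ = ∑ i, hYh.eigenvalues i := aux_trace_herm hYh
  intro i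
  change 0 ≤ hYh.eigenvalues i
  by_contra hneg
  push_neg at hneg
  have : ∑ i, hYh.eigenvalues i < ∑ i, |hYh.eigenvalues i| := by
    refine Finset.sum_lt_sum (fun j _ => le_abs_self _) ⟨i, Finset.mem_univ i, ?_⟩
    rw [abs_of_neg hneg]; linarith
  linarith
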